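/- Let W be a contraction on a Hilbert space H. The following are equivalent: (a) W is similar to a unitary operator (there is a bounded invertible Λ with Λ W Λ⁻¹ unitary); (b) W is invertible and sup_{n≥0} ‖W⁻ⁿ‖ < ∞. -/

import Mathlib

set_option synthInstance.maxHeartbeats 2000000
set_option maxHeartbeats 2000000

open Filter Topology

/-- A contraction `W` is similar to a unitary operator iff `W` is invertible
with `sup_{n≥0} ‖W⁻ⁿ‖ < ∞`. -/
theorem contraction_similar_to_unitary_iff
    {H : Type*} [NormedAddCommGroup H] [InnerProductSpace ℂ H] [CompleteSpace H]
    (W : H →L[ℂ] H) (hW : ‖W‖ ≤ 1) :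
    (∃ (U : H ≃ₗᵢ[ℂ] H) (Λ : H ≃L[ℂ] H), ∀ x, Λ (W x) = U (Λ x)) ↔
      (∃ W' : H →L[ℂ] H, W * W' = 1 ∧ W' * W = 1 ∧ ∃ C : ℝ, ∀ n : ℕ, ‖W' ^ n‖ ≤ C) := by
  constructor
  · rintro ⟨U, Λ, hc⟩
    set V : H →L[ℂ] H := U.symm.toLinearIsometry.toContinuousLinearMap with hV
    set W' : H →L[ℂ] H := ((Λ.symm : H →L[ℂ] H).comp V).comp (Λ : H →L[ℂ] H) with hW'
    have hW'app : ∀ x, W' x = Λ.symm (U.symm (Λ x)) := fun x => rfl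
    have hWapp : ∀ x, W x = Λ.symm (U (Λ x)) := by
      intro x
      rw [← hc x, ContinuousLinearEquiv.symm_apply_apply]
    refine ⟨W', ?_, ?_, ?_⟩
    · ext x
      simp [ContinuousLinearMap.mul_apply, hW'app, hWapp]
    · ext x
      simp only [ContinuousLinearMap.mul_apply, ContinuousLinearMap.one_apply, hW'app]
      rw [hc x]
      simp
    · refine ⟨‖(Λ.symm : H →L[ℂ] H)‖ * ‖(Λ : H →L[ℂ] H)‖, fun n => ?_⟩
      have hit : ∀ n x, (W' ^ n) x = Λ.symm ((fun y => U.symm y)^[n] (Λ x)) := by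
        intro n
        induction n with
        | zero => intro x; simp
        | succ n ih =>
          intro x
          rw [pow_succ', ContinuousLinearMap.mul_apply, ih, Function.iterate_succ']
          simp [hW'app]
      have hitnorm : ∀ n (y : H), ‖(fun y => U.symm y)^[n] y‖ = ‖y‖ := by
        intro n
        induction n with
        | zero => intro y; simp
        | succ n ih =>
          intro y
          rw [Function.iterate_succ']
          simp [ih]
      refine ContinuousLinearMap.opNorm_le_bound _ (by positivity) fun x => ?_
      rw [hit n x]
      calc ‖(Λ.symm : H →L[ℂ] H) ((fun y => U.symm y)^[n] (Λ x))‖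
          ≤ ‖(Λ.symm : H →L[ℂ] H)‖ * ‖(fun y => U.symm y)^[n] (Λ x)‖ :=
            (Λ.symm : H →L[ℂ] H).le_opNorm _
        _ = ‖(Λ.symm : H →L[ℂ] H)‖ * ‖(Λ : H →L[ℂ] H) x‖ := by rw [hitnorm]; rfl
        _ ≤ ‖(Λ.symm : H →L[ℂ] H)‖ * (‖(Λ : H →L[ℂ] H)‖ * ‖x‖) := by
            exact mul_le_mul_of_nonneg_left ((Λ : H →L[ℂ] H).le_opNorm x) (norm_nonneg _)
        _ = ‖(Λ.symm : H →L[ℂ] H)‖ * ‖(Λ : H →L[ℂ] H)‖ * ‖x‖ := by ring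
  · rintro ⟨W', h1, h2, C, hC⟩
    have h1' : ∀ x, W (W' x) = x := fun x => by
      have := congrFun (congrArg DFunLike.coe h1) x
      simpa [ContinuousLinearMap.mul_apply] using this
    have h2' : ∀ x, W' (W x) = x := fun x => by
      have := congrFun (congrArg DFunLike.coe h2) x
      simpa [ContinuousLinearMap.mul_apply] using this
    set K : ℝ := max C 1 with hKdef
    have hK1 : (1:ℝ) ≤ K := le_max_right _ _
    have hK0 : (0:ℝ) < K := lt_of_lt_of_le one_pos hK1
    -- cancellation of powers
    have hWn' : ∀ n (x : H), (W' ^ n) ((W ^ n) x) = x := by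
      intro n
      induction n with
      | zero => intro x; simp
      | succ n ih =>
        intro x
        rw [pow_succ W' n, pow_succ' W n]
        simp only [ContinuousLinearMap.mul_apply]
        rw [h2' ((W ^ n) x)]
        exact ih x
    -- antitone norms
    have hanti : ∀ x : H, Antitone (fun n => ‖(W ^ n) x‖) := by
      intro x
      refine antitone_nat_of_succ_le fun n => ?_
      rw [pow_succ']
      calc ‖(W * W ^ n) x‖ = ‖W ((W ^ n) x)‖ := rfl
        _ ≤ ‖W‖ * ‖(W ^ n) x‖ := W.le_opNorm _
        _ ≤ 1 * ‖(W ^ n) x‖ := mul_le_mul_of_nonneg_right hW (norm_nonneg _)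
        _ = ‖(W ^ n) x‖ := one_mul _
    have hcontr : ∀ n (x : H), ‖(W ^ n) x‖ ≤ ‖x‖ := by
      intro n x
      have := hanti x (Nat.zero_le n)
      simpa using this
    have hlow : ∀ n (x : H), ‖x‖ / K ≤ ‖(W ^ n) x‖ := by
      intro n x
      rw [div_le_iff₀ hK0]
      calc ‖x‖ = ‖(W' ^ n) ((W ^ n) x)‖ := by rw [hWn']
        _ ≤ ‖W' ^ n‖ * ‖(W ^ n) x‖ := (W' ^ n).le_opNorm _
        _ ≤ K * ‖(W ^ n) x‖ :=
            mul_le_mul_of_nonneg_right ((hC n).trans (le_max_left _ _)) (norm_nonneg _)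
        _ = ‖(W ^ n) x‖ * K := mul_comm _ _
    -- the limit seminorm
    set N : H → ℝ := fun x => ⨅ n : ℕ, ‖(W ^ n) x‖ with hNdef
    have hNt : ∀ x : H, Tendsto (fun n => ‖(W ^ n) x‖) atTop (𝓝 (N x)) := by
      intro x
      exact tendsto_atTop_ciInf (hanti x) ⟨0, by rintro y ⟨n, rfl⟩; positivity⟩
    have hN0 : ∀ x : H, ‖x‖ / K ≤ N x := fun x =>
      le_ciInf fun n => hlow n x
    have hNnn : ∀ x : H, 0 ≤ N x := fun x =>
      le_trans (by positivity) (hN0 x)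
    have hNle : ∀ x : H, N x ≤ ‖x‖ := fun x =>
      ciInf_le_of_le ⟨0, by rintro y ⟨n, rfl⟩; positivity⟩ 0 (by simp)
    have hNtC : ∀ x : H, Tendsto (fun n => ((‖(W ^ n) x‖ : ℂ))) atTop (𝓝 ((N x : ℂ))) := by
      intro x
      exact (Complex.continuous_ofReal.tendsto _).comp (hNt x)
    -- the limit sesquilinear form
    set B : H → H → ℂ := fun x y =>
      (((N (x + y) : ℂ)) ^ 2 - ((N (x - y) : ℂ)) ^ 2 +
        (((N (x - Complex.I • y) : ℂ)) ^ 2 - ((N (x + Complex.I • y) : ℂ)) ^ 2) * Complex.I) / 4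
      with hBdef
    have htend : ∀ x y : H, Tendsto (fun n => (inner ℂ ((W ^ n) x) ((W ^ n) y) : ℂ))
        atTop (𝓝 (B x y)) := by
      intro x y
      have heq : (fun n => (inner ℂ ((W ^ n) x) ((W ^ n) y) : ℂ)) = fun n =>
          ((‖(W ^ n) (x + y)‖ : ℂ) ^ 2 - (‖(W ^ n) (x - y)‖ : ℂ) ^ 2 +
            ((‖(W ^ n) (x - Complex.I • y)‖ : ℂ) ^ 2
              - (‖(W ^ n) (x + Complex.I • y)‖ : ℂ) ^ 2) * Complex.I) / 4 := by
        funext n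
        have := inner_eq_sum_norm_sq_div_four (𝕜 := ℂ) ((W ^ n) x) ((W ^ n) y)
        simpa [map_add, map_sub, map_smul] using this
      rw [heq]
      exact ((((((hNtC (x + y)).pow 2).sub ((hNtC (x - y)).pow 2)).add
        ((((hNtC (x - Complex.I • y)).pow 2).sub
          ((hNtC (x + Complex.I • y)).pow 2)).mul_const Complex.I))).div_const 4)
    -- properties of B
    have hBxx : ∀ x : H, B x x = ((N x : ℂ)) ^ 2 := by
      intro x
      refine tendsto_nhds_unique (htend x x) ?_
      have : (fun n => (inner ℂ ((W ^ n) x) ((W ^ n) x) : ℂ))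
          = fun n => ((‖(W ^ n) x‖ : ℂ)) ^ 2 := by
        funext n
        exact inner_self_eq_norm_sq_to_K (𝕜 := ℂ) _
      rw [this]
      exact (hNtC x).pow 2
    have hBW : ∀ x y : H, B (W x) (W y) = B x y := by
      intro x y
      refine tendsto_nhds_unique (htend (W x) (W y)) ?_
      have hshift : Tendsto (fun n => (inner ℂ ((W ^ (n + 1)) x) ((W ^ (n + 1)) y) : ℂ))
          atTop (𝓝 (B x y)) := (htend x y).comp (tendsto_add_atTop_nat 1)
      have : (fun n => (inner ℂ ((W ^ (n + 1)) x) ((W ^ (n + 1)) y) : ℂ))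
          = fun n => (inner ℂ ((W ^ n) (W x)) ((W ^ n) (W y)) : ℂ) := by
        funext n
        rw [pow_succ]
        rfl
      rwa [this] at hshift
    have hBnorm : ∀ x y : H, ‖B x y‖ ≤ ‖x‖ * ‖y‖ := by
      intro x y
      refine le_of_tendsto (htend x y).norm (Eventually.of_forall fun n => ?_)
      calc ‖(inner ℂ ((W ^ n) x) ((W ^ n) y) : ℂ)‖ ≤ ‖(W ^ n) x‖ * ‖(W ^ n) y‖ :=
            norm_inner_le_norm _ _
        _ ≤ ‖x‖ * ‖y‖ :=
            mul_le_mul (hcontr n x) (hcontr n y) (norm_nonneg _) (norm_nonneg _)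
    have hBaddR : ∀ (x y z : H), B x (y + z) = B x y + B x z := by
      intro x y z
      refine tendsto_nhds_unique (htend x (y + z)) ?_
      refine ((htend x y).add (htend x z)).congr fun n => ?_
      rw [← inner_add_right, ← map_add]
    have hBsmulR : ∀ (c : ℂ) (x y : H), B x (c • y) = c * B x y := by
      intro c x y
      refine tendsto_nhds_unique (htend x (c • y)) ?_
      refine ((htend x y).const_mul c).congr fun n => ?_
      rw [← inner_smul_right, ← map_smul]
    have hBaddL : ∀ (x y z : H), B (x + y) z = B x z + B y z := by
      intro x y z
      refine tendsto_nhds_unique (htend (x + y) z) ?_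
      refine ((htend x z).add (htend y z)).congr fun n => ?_
      rw [← inner_add_left, ← map_add]
    have hBsmulL : ∀ (c : ℂ) (x y : H), B (c • x) y = (starRingEnd ℂ) c * B x y := by
      intro c x y
      refine tendsto_nhds_unique (htend (c • x) y) ?_
      refine ((htend x y).const_mul _).congr fun n => ?_
      rw [← inner_smul_left, ← map_smul]
    have hBconj : ∀ x y : H, B y x = (starRingEnd ℂ) (B x y) := by
      intro x y
      refine tendsto_nhds_unique (htend y x) ?_
      have : Tendsto (fun n => (starRingEnd ℂ) (inner ℂ ((W ^ n) x) ((W ^ n) y) : ℂ))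
          atTop (𝓝 ((starRingEnd ℂ) (B x y))) :=
        (Complex.continuous_conj.tendsto _).comp (htend x y)
      refine this.congr fun n => ?_
      rw [inner_conj_symm]
    -- construct the positive operator P representing B
    have hφbound : ∀ x y : H, ‖B x y‖ ≤ ‖x‖ * ‖y‖ := hBnorm
    set φ : H → (H →L[ℂ] ℂ) := fun x =>
      LinearMap.mkContinuous
        { toFun := fun y => B x y
          map_add' := fun y z => hBaddR x y z
          map_smul' := fun c y => by simpa using hBsmulR c x y } ‖x‖
        (fun y => by simpa using hφbound x y) with hφdef
    have hφapp : ∀ x y : H, φ x y = B x y := fun x y => rfl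
    set P0 : H → H := fun x => (InnerProductSpace.toDual ℂ H).symm (φ x) with hP0def
    have hP0 : ∀ x y : H, (inner ℂ (P0 x) y : ℂ) = B x y := by
      intro x y
      rw [hP0def]
      exact InnerProductSpace.toDual_symm_apply
    have hP0add : ∀ x y : H, P0 (x + y) = P0 x + P0 y := by
      intro x y
      refine ext_inner_right ℂ fun v => ?_
      rw [hP0 (x + y) v, hBaddL, inner_add_left, hP0, hP0]
    have hP0smul : ∀ (c : ℂ) (x : H), P0 (c • x) = c • P0 x := by
      intro c x
      refine ext_inner_right ℂ fun v => ?_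
      rw [hP0 (c • x) v, hBsmulL, inner_smul_left, hP0]
    set P : H →L[ℂ] H := LinearMap.mkContinuous
      { toFun := P0
        map_add' := hP0add
        map_smul' := fun c x => by simpa using hP0smul c x } 1
      (fun x => by
        rw [one_mul]
        show ‖P0 x‖ ≤ ‖x‖
        have : ‖P0 x‖ = ‖φ x‖ := by
          rw [hP0def]
          exact LinearIsometryEquiv.norm_map _ _
        rw [this]
        exact LinearMap.mkContinuous_norm_le _ (norm_nonneg x) _) with hPdef
    have hP : ∀ x y : H, (inner ℂ (P x) y : ℂ) = B x y := hP0
    -- P is self-adjoint and positive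
    have hPsa : IsSelfAdjoint P := by
      rw [ContinuousLinearMap.isSelfAdjoint_iff']
      refine ((ContinuousLinearMap.eq_adjoint_iff P P).mpr fun x y => ?_).symm
      rw [hP x y, ← inner_conj_symm x (P y), hP y x, hBconj x y, Complex.conj_conj]
    have hPinnxx : ∀ x : H, (inner ℂ (P x) x : ℂ) = ((N x : ℂ)) ^ 2 := by
      intro x
      rw [hP, hBxx]
    have hPpos : P.IsPositive := by
      refine ContinuousLinearMap.isPositive_def'.mpr ⟨hPsa, fun x => ?_⟩
      rw [ContinuousLinearMap.reApplyInnerSelf_apply, hPinnxx]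
      simpa [← Complex.ofReal_pow] using sq_nonneg (N x)
    have hPnn : (0 : H →L[ℂ] H) ≤ P := (ContinuousLinearMap.nonneg_iff_isPositive P).mpr hPpos
    have hPunit : IsUnit P := by
      have hKc : (0:ℝ) ≤ (1 / K) ^ 2 := by positivity
      refine ContinuousLinearMap.isUnit_of_forall_le_norm_inner_map P
        (c := ⟨(1 / K) ^ 2, hKc⟩) ?_ fun x => ?_
      · exact_mod_cast show (0:ℝ) < (1 / K) ^ 2 by positivity
      · rw [hPinnxx]
        have hnrm : ‖((N x : ℂ)) ^ 2‖ = N x ^ 2 := by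
          rw [norm_pow, Complex.norm_real, Real.norm_of_nonneg (hNnn x)]
        rw [hnrm]
        calc ‖x‖ ^ 2 * ((⟨(1 / K) ^ 2, hKc⟩ : NNReal) : ℝ) = (‖x‖ / K) ^ 2 := by
              show ‖x‖ ^ 2 * (1 / K) ^ 2 = _
              rw [div_pow, div_pow]
              ring
          _ ≤ N x ^ 2 := by
              have := hN0 x
              have h0 : (0:ℝ) ≤ ‖x‖ / K := by positivity
              exact pow_le_pow_left₀ h0 this 2
    -- the square root of P
    set R : H →L[ℂ] H := CFC.sqrt P with hRdef
    have hR0 : (0 : H →L[ℂ] H) ≤ R := CFC.sqrt_nonneg P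
    have hRR : R * R = P := CFC.sqrt_mul_sqrt_self P hPnn
    have hRsa : IsSelfAdjoint R :=
      ((ContinuousLinearMap.nonneg_iff_isPositive R).mp hR0).isSelfAdjoint
    have hRadj : ContinuousLinearMap.adjoint R = R :=
      ContinuousLinearMap.isSelfAdjoint_iff'.mp hRsa
    have hRinner : ∀ x y : H, (inner ℂ (R x) (R y) : ℂ) = B x y := by
      intro x y
      have step1 : (inner ℂ (R x) (R y) : ℂ) = inner ℂ x ((R * R) y) := by
        rw [ContinuousLinearMap.mul_apply]
        nth_rewrite 1 [← hRadj]
        exact ContinuousLinearMap.adjoint_inner_left R (R y) x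
      rw [step1, hRR, ← inner_conj_symm x (P y), hP y x, hBconj x y, Complex.conj_conj]
    have hRnorm : ∀ x : H, ‖R x‖ = N x := by
      intro x
      have h2 : ‖R x‖ ^ 2 = N x ^ 2 := by
        rw [← inner_self_eq_norm_sq (𝕜 := ℂ) (R x), hRinner, hBxx]
        simp [← Complex.ofReal_pow]
      calc ‖R x‖ = Real.sqrt (‖R x‖ ^ 2) := (Real.sqrt_sq (norm_nonneg _)).symm
        _ = Real.sqrt (N x ^ 2) := by rw [h2]
        _ = N x := Real.sqrt_sq (hNnn x)
    have hNW : ∀ x : H, N (W x) = N x := by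
      intro x
      have h1 : ((N (W x) : ℂ)) ^ 2 = ((N x : ℂ)) ^ 2 := by
        rw [← hBxx, ← hBxx, hBW]
      have h2 : N (W x) ^ 2 = N x ^ 2 := by exact_mod_cast h1
      calc N (W x) = Real.sqrt (N (W x) ^ 2) := (Real.sqrt_sq (hNnn _)).symm
        _ = Real.sqrt (N x ^ 2) := by rw [h2]
        _ = N x := Real.sqrt_sq (hNnn x)
    -- invert R using the invertibility of P
    obtain ⟨u, hu⟩ := hPunit
    have hcommP : Commute R ((u : H →L[ℂ] H)) := by
      rw [hu, ← hRR]
      exact (Commute.refl R).mul_right (Commute.refl R)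
    have hcomm : Commute R ((↑u⁻¹ : H →L[ℂ] H)) := hcommP.units_inv_right
    set Rinv : H →L[ℂ] H := R * (↑u⁻¹ : H →L[ℂ] H) with hRinvdef
    have hRRinv : R * Rinv = 1 := by
      rw [hRinvdef, ← mul_assoc, hRR, ← hu]
      exact_mod_cast u.mul_inv
    have hRinvR : Rinv * R = 1 := by
      rw [hRinvdef, mul_assoc, ← hcomm.eq, ← mul_assoc, hRR, ← hu]
      exact_mod_cast u.mul_inv
    set Λe : H ≃L[ℂ] H := ContinuousLinearEquiv.equivOfInverse R Rinv
      (fun x => by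
        have := congrFun (congrArg DFunLike.coe hRinvR) x
        simpa [ContinuousLinearMap.mul_apply] using this)
      (fun x => by
        have := congrFun (congrArg DFunLike.coe hRRinv) x
        simpa [ContinuousLinearMap.mul_apply] using this) with hΛdef
    set We : H ≃L[ℂ] H := ContinuousLinearEquiv.equivOfInverse W W' h2' h1' with hWedef
    set Ue : H ≃L[ℂ] H := (Λe.symm.trans We).trans Λe with hUedef
    have hΛapp : ∀ x, Λe x = R x := fun x => rfl
    have hUeapp : ∀ y, Ue y = R (W (Λe.symm y)) := fun y => rfl
    have hUnorm : ∀ y, ‖Ue y‖ = ‖y‖ := by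
      intro y
      rw [hUeapp, hRnorm, hNW, ← hRnorm, ← hΛapp, Λe.apply_symm_apply]
    refine ⟨⟨Ue.toLinearEquiv, hUnorm⟩, Λe, fun x => ?_⟩
    show Λe (W x) = Ue (Λe x)
    rw [hUedef]
    simp only [ContinuousLinearEquiv.trans_apply, ContinuousLinearEquiv.symm_apply_apply]
    congr 1
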